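/- The down-up algebra A(α,β,γ) is ℤ-graded with A = ⊕ₙ Aₙ where Aₙ = span{uⁱ(du)ʲdᵏ : i − k = n}, and the zero component A₀ = span{uⁱ(du)ʲdⁱ : i, j ≥ 0} is a commutative subalgebra. -/

import Mathlib

open FreeAlgebra

/-- The defining relations of the down-up algebra A(α,β,γ): with d = ι true,
u = ι false, we impose d²u = α·dud + β·ud² + γ·d and du² = α·udu + β·u²d + γ·u. -/
inductive DownUpRel (α β γ : ℂ) : FreeAlgebra ℂ Bool → FreeAlgebra ℂ Bool → Prop
  | rel1 : DownUpRel α β γ (ι ℂ true * ι ℂ true * ι ℂ false)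
      (α • (ι ℂ true * ι ℂ false * ι ℂ true) + β • (ι ℂ false * ι ℂ true * ι ℂ true)
        + γ • ι ℂ true)
  | rel2 : DownUpRel α β γ (ι ℂ true * ι ℂ false * ι ℂ false)
      (α • (ι ℂ false * ι ℂ true * ι ℂ false) + β • (ι ℂ false * ι ℂ false * ι ℂ true)
        + γ • ι ℂ false)

/-- The down-up algebra A(α,β,γ). -/
abbrev DownUp (α β γ : ℂ) := RingQuot (DownUpRel α β γ)

/-- The generator d of the down-up algebra. -/
noncomputable def DownUp.d (α β γ : ℂ) : DownUp α β γ :=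
  RingQuot.mkAlgHom ℂ (DownUpRel α β γ) (ι ℂ true)

/-- The generator u of the down-up algebra. -/
noncomputable def DownUp.u (α β γ : ℂ) : DownUp α β γ :=
  RingQuot.mkAlgHom ℂ (DownUpRel α β γ) (ι ℂ false)

namespace DownUpAux
variable {α β γ : ℂ}

local notation "d" => DownUp.d α β γ
local notation "u" => DownUp.u α β γ

lemma rel1 : d*d*u = α • (d*u*d) + β • (u*d*d) + γ • d := by
  have h := RingQuot.mkAlgHom_rel ℂ (DownUpRel.rel1 (α := α) (β := β) (γ := γ))
  simpa [map_mul, map_add, DownUp.d, DownUp.u] using h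

lemma rel2 : d*u*u = α • (u*d*u) + β • (u*u*d) + γ • u := by
  have h := RingQuot.mkAlgHom_rel ℂ (DownUpRel.rel2 (α := α) (β := β) (γ := γ))
  simpa [map_mul, map_add, DownUp.d, DownUp.u] using h

/-- bounded-length graded pieces -/
noncomputable def T (α β γ : ℂ) (n : ℤ) (L : ℕ) : Submodule ℂ (DownUp α β γ) :=
  Submodule.span ℂ {a | ∃ i j k : ℕ, (i:ℤ) - k = n ∧ i + 2*j + k ≤ L ∧
    a = DownUp.u α β γ ^ i * (DownUp.d α β γ * DownUp.u α β γ) ^ j * DownUp.d α β γ ^ k}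

/-- full graded pieces -/
noncomputable def G (α β γ : ℂ) (n : ℤ) : Submodule ℂ (DownUp α β γ) :=
  Submodule.span ℂ {a | ∃ i j k : ℕ, (i:ℤ) - k = n ∧
    a = DownUp.u α β γ ^ i * (DownUp.d α β γ * DownUp.u α β γ) ^ j * DownUp.d α β γ ^ k}

lemma mem_T {n : ℤ} {L i j k : ℕ} (h1 : (i:ℤ) - k = n) (h2 : i + 2*j + k ≤ L) :
    u^i * (d*u)^j * d^k ∈ T α β γ n L :=
  Submodule.subset_span ⟨i, j, k, h1, h2, rfl⟩

lemma T_le_G {n : ℤ} {L : ℕ} : T α β γ n L ≤ G α β γ n :=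
  Submodule.span_mono fun _ ⟨i, j, k, h1, _, h3⟩ => ⟨i, j, k, h1, h3⟩

lemma T_mono {n : ℤ} {L L' : ℕ} (h : L ≤ L') : T α β γ n L ≤ T α β γ n L' :=
  Submodule.span_mono fun _ ⟨i, j, k, h1, h2, h3⟩ => ⟨i, j, k, h1, h2.trans h, h3⟩

lemma mem_G_iff {n : ℤ} {x : DownUp α β γ} : x ∈ G α β γ n ↔ ∃ L, x ∈ T α β γ n L := by
  constructor
  · intro hx
    have : G α β γ n ≤ ⨆ L, T α β γ n L := by
      rw [G, Submodule.span_le]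
      rintro a ⟨i, j, k, h1, h3⟩
      exact Submodule.mem_iSup_of_mem (i + 2*j + k) (h3 ▸ mem_T h1 le_rfl)
    rw [← Submodule.mem_iSup_of_directed]
    · exact this hx
    · exact fun L L' => ⟨max L L', T_mono (le_max_left _ _), T_mono (le_max_right _ _)⟩
  · rintro ⟨L, hL⟩; exact T_le_G hL


lemma rel1' (y : DownUp α β γ) :
    d*(d*(u*y)) = α•(d*(u*(d*y))) + β•(u*(d*(d*y))) + γ•(d*y) := by
  have h := congrArg (· * y) (rel1 (α := α) (β := β) (γ := γ))
  simpa [add_mul, smul_mul_assoc, mul_assoc] using h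

lemma rel2' (y : DownUp α β γ) :
    d*(u*(u*y)) = α•(u*(d*(u*y))) + β•(u*(u*(d*y))) + γ•(u*y) := by
  have h := congrArg (· * y) (rel2 (α := α) (β := β) (γ := γ))
  simpa [add_mul, smul_mul_assoc, mul_assoc] using h

lemma u_mul_T {n : ℤ} {L : ℕ} {x : DownUp α β γ} (hx : x ∈ T α β γ n L) :
    u * x ∈ T α β γ (n+1) (L+1) := by
  induction hx using Submodule.span_induction with
  | mem a ha =>
    obtain ⟨i, j, k, h1, h2, rfl⟩ := ha
    rw [← mul_assoc, ← mul_assoc, ← pow_succ']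
    exact mem_T (by push_cast; omega) (by omega)
  | zero => simpa using Submodule.zero_mem _
  | add x y _ _ ihx ihy => rw [mul_add]; exact add_mem ihx ihy
  | smul c x _ ihx => rw [mul_smul_comm]; exact Submodule.smul_mem _ c ihx

lemma mul_d_T {n : ℤ} {L : ℕ} {x : DownUp α β γ} (hx : x ∈ T α β γ n L) :
    x * d ∈ T α β γ (n-1) (L+1) := by
  induction hx using Submodule.span_induction with
  | mem a ha =>
    obtain ⟨i, j, k, h1, h2, rfl⟩ := ha
    rw [mul_assoc, ← pow_succ]
    exact mem_T (by push_cast; omega) (by omega)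
  | zero => simpa using Submodule.zero_mem _
  | add x y _ _ ihx ihy => rw [add_mul]; exact add_mem ihx ihy
  | smul c x _ ihx => rw [smul_mul_assoc]; exact Submodule.smul_mem _ c ihx

lemma d_v_mul_T : ∀ L : ℕ, ∀ n : ℤ, ∀ x : DownUp α β γ, x ∈ T α β γ n L →
    (d * x ∈ T α β γ (n-1) (L+1)) ∧ ((d*u) * x ∈ T α β γ n (L+2)) := by
  intro L
  induction L using Nat.strong_induction_on with
  | _ L IH =>
    intro n x hx
    induction hx using Submodule.span_induction with
    | zero =>
      constructor <;> · simpa using Submodule.zero_mem _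
    | add x y _ _ ihx ihy =>
      exact ⟨by rw [mul_add]; exact add_mem ihx.1 ihy.1,
             by rw [mul_add]; exact add_mem ihx.2 ihy.2⟩
    | smul c x _ ihx =>
      exact ⟨by rw [mul_smul_comm]; exact Submodule.smul_mem _ c ihx.1,
             by rw [mul_smul_comm]; exact Submodule.smul_mem _ c ihx.2⟩
    | mem a ha =>
      obtain ⟨i, j, k, h1, h2, rfl⟩ := ha
      rcases i with _ | i'
      · -- i = 0
        rcases j with _ | j'
        · -- i = 0, j = 0 : monomial is d^k
          simp only [pow_zero, one_mul]
          constructor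
          · rw [← pow_succ']
            have : ((0:ℕ):ℤ) - (k+1:ℕ) = n - 1 := by push_cast at h1 ⊢; omega
            simpa using mem_T (i := 0) (j := 0) this (by omega)
          · have h0 : d*u*d^k = u^0 * (d*u)^1 * d^k := by
              simp [pow_one]
            rw [h0]
            have e1 : ((0:ℕ):ℤ) - (k:ℤ) = n := by push_cast at h1 ⊢; omega
            exact mem_T e1 (by omega)
        · -- i = 0, j = j'+1
          simp only [pow_zero, one_mul]
          set L' : ℕ := 2*j' + k with hL'
          have hlt1 : L' < L := by omega
          have hlt2 : L' + 1 < L := by omega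
          have e1 : ((0:ℕ):ℤ) - (k:ℤ) = n := by push_cast at h1 ⊢; omega
          have hm' : (d*u)^j' * d^k ∈ T α β γ n L' := by
            have := mem_T (α := α) (β := β) (γ := γ) (i := 0) (j := j') (k := k)
              e1 (le_refl (0 + 2*j' + k))
            simpa using this
          constructor
          · -- d * ((d*u)^(j'+1) * d^k)
            rw [pow_succ']
            simp only [mul_assoc]
            rw [rel1']
            have hd : d * ((d*u)^j' * d^k) ∈ T α β γ (n-1) (L'+1) :=
              (IH L' hlt1 _ _ hm').1
            have t1 : d*(u*(d*((d*u)^j' * d^k))) ∈ T α β γ (n-1) (L'+3) := by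
              have h := (IH (L'+1) hlt2 _ _ hd).2
              rw [mul_assoc] at h
              exact h
            have t2 : u*(d*(d*((d*u)^j' * d^k))) ∈ T α β γ (n-1) (L'+3) := by
              have h := (IH (L'+1) hlt2 _ _ hd).1
              have h2 := u_mul_T h
              have hn : n - 1 - 1 + 1 = n - 1 := by ring
              rw [hn] at h2
              exact T_mono (by omega) h2
            refine add_mem (add_mem ?_ ?_) ?_
            · exact Submodule.smul_mem _ _ (T_mono (by omega) t1)
            · exact Submodule.smul_mem _ _ (T_mono (by omega) t2)
            · exact Submodule.smul_mem _ _ (T_mono (by omega) hd)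
          · -- (d*u) * ((d*u)^(j'+1) * d^k)
            rw [← mul_assoc, ← pow_succ']
            have h0 : (d*u)^(j'+1+1) * d^k = u^0 * (d*u)^(j'+1+1) * d^k := by simp
            rw [h0]
            exact mem_T e1 (by omega)
      · -- i = i'+1
        set L' : ℕ := i' + 2*j + k with hL'
        have hlt1 : L' < L := by omega
        have hm' : u^i' * (d*u)^j * d^k ∈ T α β γ (n-1) L' :=
          mem_T (by push_cast at h1 ⊢; omega) le_rfl
        rw [pow_succ']
        simp only [mul_assoc]
        rw [mul_assoc] at hm'
        constructor
        · -- d * (u * m') = (d*u) * m'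
          rw [← mul_assoc]
          exact T_mono (by omega) (IH L' hlt1 _ _ hm').2
        · -- (d*u) * (u * m')
          rw [rel2']
          have t1 : u*(d*(u*(u^i' * ((d*u)^j * d^k)))) ∈ T α β γ n (L'+3) := by
            have h := (IH L' hlt1 _ _ hm').2
            rw [mul_assoc] at h
            have h2 := u_mul_T h
            have hn : n - 1 + 1 = n := by ring
            rw [hn] at h2
            exact h2
          have t2 : u*(u*(d*(u^i' * ((d*u)^j * d^k)))) ∈ T α β γ n (L'+3) := by
            have h := (IH L' hlt1 _ _ hm').1
            have h2 := u_mul_T (u_mul_T h)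
            have hn : n - 1 - 1 + 1 + 1 = n := by ring
            rw [hn] at h2
            exact h2
          have t3 : u*(u^i' * ((d*u)^j * d^k)) ∈ T α β γ n (L'+1) := by
            have h2 := u_mul_T hm'
            have hn : n - 1 + 1 = n := by ring
            rw [hn] at h2
            exact h2
          refine add_mem (add_mem ?_ ?_) ?_
          · exact Submodule.smul_mem _ _ (T_mono (by omega) t1)
          · exact Submodule.smul_mem _ _ (T_mono (by omega) t2)
          · exact Submodule.smul_mem _ _ (T_mono (by omega) t3)


lemma dpow_mul_T {n : ℤ} {L : ℕ} {x : DownUp α β γ} (hx : x ∈ T α β γ n L) :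
    ∀ k : ℕ, d^k * x ∈ T α β γ (n - k) (L + k) := by
  intro k
  induction k with
  | zero => simpa using hx
  | succ k ih =>
    have h := (d_v_mul_T (L + k) (n - k) _ ih).1
    rw [pow_succ', mul_assoc]
    have e : (n : ℤ) - k - 1 = n - (k+1 : ℕ) := by push_cast; ring
    rw [e] at h
    exact h

lemma vpow_mul_T {n : ℤ} {L : ℕ} {x : DownUp α β γ} (hx : x ∈ T α β γ n L) :
    ∀ j : ℕ, (d*u)^j * x ∈ T α β γ n (L + 2*j) := by
  intro j
  induction j with
  | zero => simpa using hx
  | succ j ih =>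
    have h := (d_v_mul_T (L + 2*j) n _ ih).2
    rw [pow_succ', mul_assoc]
    exact T_mono (by omega) h

lemma upow_mul_T {n : ℤ} {L : ℕ} {x : DownUp α β γ} (hx : x ∈ T α β γ n L) :
    ∀ i : ℕ, u^i * x ∈ T α β γ (n + i) (L + i) := by
  intro i
  induction i with
  | zero => simpa using hx
  | succ i ih =>
    have h := u_mul_T ih
    rw [pow_succ', mul_assoc]
    have e : (n : ℤ) + i + 1 = n + (i+1 : ℕ) := by push_cast; ring
    rw [e] at h
    exact h

lemma mul_G {m n : ℤ} {x y : DownUp α β γ} (hx : x ∈ G α β γ m) (hy : y ∈ G α β γ n) :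
    x * y ∈ G α β γ (m + n) := by
  obtain ⟨L, hyT⟩ := mem_G_iff.mp hy
  induction hx using Submodule.span_induction with
  | mem a ha =>
    obtain ⟨i, j, k, h1, rfl⟩ := ha
    simp only [mul_assoc]
    have h2 := upow_mul_T (vpow_mul_T (dpow_mul_T hyT k) j) i
    have e : n - k + i = m + n := by omega
    rw [e] at h2
    exact T_le_G h2
  | zero => simpa using Submodule.zero_mem _
  | add x y _ _ ihx ihy => rw [add_mul]; exact add_mem ihx ihy
  | smul c x _ ihx => rw [smul_mul_assoc]; exact Submodule.smul_mem _ c ihx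

lemma one_mem_G0 : (1 : DownUp α β γ) ∈ G α β γ 0 :=
  Submodule.subset_span ⟨0, 0, 0, by simp, by simp⟩
lemma u_mem_G : u ∈ G α β γ 1 :=
  Submodule.subset_span ⟨1, 0, 0, by simp, by simp⟩
lemma d_mem_G : d ∈ G α β γ (-1) :=
  Submodule.subset_span ⟨0, 0, 1, by simp, by simp⟩

lemma mul_mem_iSup {x y : DownUp α β γ} (hx : x ∈ ⨆ n, G α β γ n)
    (hy : y ∈ ⨆ n, G α β γ n) : x * y ∈ ⨆ n, G α β γ n := by
  refine Submodule.iSup_induction (motive := fun x => x * y ∈ ⨆ n, G α β γ n) _ hx ?_ ?_ ?_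
  · intro m x hx
    refine Submodule.iSup_induction (motive := fun y => x * y ∈ ⨆ n, G α β γ n) _ hy ?_ ?_ ?_
    · intro n y hy; exact Submodule.mem_iSup_of_mem (m + n) (mul_G hx hy)
    · simpa using Submodule.zero_mem _
    · intro a b iha ihb; rw [mul_add]; exact add_mem iha ihb
  · simpa using Submodule.zero_mem _
  · intro a b iha ihb; rw [add_mul]; exact add_mem iha ihb

lemma iSup_G_eq_top : (⨆ n, G α β γ n) = ⊤ := by
  rw [eq_top_iff]
  rintro a -
  obtain ⟨x, rfl⟩ := RingQuot.mkAlgHom_surjective ℂ (DownUpRel α β γ) a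
  induction x using FreeAlgebra.induction with
  | grade0 r =>
    rw [AlgHom.commutes, Algebra.algebraMap_eq_smul_one]
    exact Submodule.smul_mem _ _ (Submodule.mem_iSup_of_mem 0 one_mem_G0)
  | grade1 b =>
    cases b
    · exact Submodule.mem_iSup_of_mem 1 u_mem_G
    · exact Submodule.mem_iSup_of_mem (-1) d_mem_G
  | mul x y ihx ihy => rw [map_mul]; exact mul_mem_iSup ihx ihy
  | add x y ihx ihy => rw [map_add]; exact add_mem ihx ihy

lemma smul_single'' (c : ℂ) (a : ℤ) (b : DownUp α β γ) :
    c • AddMonoidAlgebra.single a b = AddMonoidAlgebra.single a (c • b) :=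
  AddMonoidAlgebra.smul_single c a b

/-- The grading homomorphism into the monoid algebra over ℤ. -/
noncomputable def psi (α β γ : ℂ) :
    DownUp α β γ →ₐ[ℂ] AddMonoidAlgebra (DownUp α β γ) ℤ :=
  RingQuot.liftAlgHom ℂ ⟨FreeAlgebra.lift ℂ (fun b =>
      AddMonoidAlgebra.single (cond b (-1 : ℤ) 1) (cond b (DownUp.d α β γ) (DownUp.u α β γ))), by
    have e1 : (-1 : ℤ) + -1 + 1 = -1 := by norm_num
    have e2 : (-1 : ℤ) + 1 + -1 = -1 := by norm_num
    have e3 : (1 : ℤ) + -1 + -1 = -1 := by norm_num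
    have e4 : (-1 : ℤ) + 1 + 1 = 1 := by norm_num
    have e5 : (1 : ℤ) + -1 + 1 = 1 := by norm_num
    have e6 : (1 : ℤ) + 1 + -1 = 1 := by norm_num
    rintro x y ⟨⟩ <;>
      simp only [map_mul, map_add, map_smul, FreeAlgebra.lift_ι_apply, cond_true, cond_false,
        AddMonoidAlgebra.single_mul_single, Finsupp.smul_single]
    · rw [e1, e2, e3, rel1, AddMonoidAlgebra.single_add, AddMonoidAlgebra.single_add,
        smul_single'', smul_single'', smul_single'']
    · rw [e4, e5, e6, rel2, AddMonoidAlgebra.single_add, AddMonoidAlgebra.single_add,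
        smul_single'', smul_single'', smul_single'']⟩

lemma psi_d : psi α β γ d = AddMonoidAlgebra.single (-1 : ℤ) d := by
  show psi α β γ (RingQuot.mkAlgHom ℂ (DownUpRel α β γ) (FreeAlgebra.ι ℂ true)) = _
  rw [psi, RingQuot.liftAlgHom_mkAlgHom_apply, FreeAlgebra.lift_ι_apply, cond_true, cond_true]

lemma psi_u : psi α β γ u = AddMonoidAlgebra.single (1 : ℤ) u := by
  show psi α β γ (RingQuot.mkAlgHom ℂ (DownUpRel α β γ) (FreeAlgebra.ι ℂ false)) = _
  rw [psi, RingQuot.liftAlgHom_mkAlgHom_apply, FreeAlgebra.lift_ι_apply, cond_false, cond_false]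

lemma psi_G {n : ℤ} {x : DownUp α β γ} (hx : x ∈ G α β γ n) :
    psi α β γ x = AddMonoidAlgebra.single n x := by
  induction hx using Submodule.span_induction with
  | mem a ha =>
    obtain ⟨i, j, k, h1, rfl⟩ := ha
    rw [map_mul, map_mul, map_pow, map_pow, map_pow, map_mul, psi_d, psi_u,
      AddMonoidAlgebra.single_mul_single, AddMonoidAlgebra.single_pow,
      AddMonoidAlgebra.single_pow, AddMonoidAlgebra.single_pow,
      AddMonoidAlgebra.single_mul_single, AddMonoidAlgebra.single_mul_single]
    congr 1
    simp only [nsmul_eq_mul, mul_one, mul_neg_one, neg_add_cancel, mul_zero]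
    omega
  | zero => simp
  | add x y hx hy ihx ihy => rw [map_add, ihx, ihy, ← AddMonoidAlgebra.single_add]
  | smul c x hx ihx => rw [map_smul, ihx, smul_single'']

lemma indep_G : iSupIndep (fun n => G α β γ n) := by
  intro i
  rw [Submodule.disjoint_def]
  intro x hxi hxo
  have hx0 : (psi α β γ x).coeff i = 0 := by
    set K : Submodule ℂ (DownUp α β γ) :=
      { carrier := {z | (psi α β γ z).coeff i = 0}
        add_mem' := by
          intro a b ha hb
          simp only [Set.mem_setOf_eq] at *
          have h : (psi α β γ (a + b)).coeff i = (psi α β γ a).coeff i + (psi α β γ b).coeff i := by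
            rw [map_add, AddMonoidAlgebra.coeff_add]; exact Finsupp.add_apply _ _ _
          rw [h, ha, hb, add_zero]
        zero_mem' := by simp only [Set.mem_setOf_eq, map_zero]; rfl
        smul_mem' := by
          intro c a ha
          simp only [Set.mem_setOf_eq] at *
          have h : (psi α β γ (c • a)).coeff i = c • (psi α β γ a).coeff i := by
            rw [map_smul, AddMonoidAlgebra.coeff_smul]; exact Finsupp.smul_apply _ _ _
          rw [h, ha, smul_zero] } with hK
    have hle : (⨆ j, ⨆ (_ : j ≠ i), G α β γ j) ≤ K := by
      refine iSup_le fun j => iSup_le fun hj => ?_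
      intro z hz
      show (psi α β γ z).coeff i = 0
      rw [psi_G hz, AddMonoidAlgebra.coeff_single, Finsupp.single_apply_eq_zero]
      intro h; exact absurd h.symm hj
    exact hle hxo
  rw [psi_G hxi, AddMonoidAlgebra.coeff_single, Finsupp.single_eq_same] at hx0
  exact hx0

lemma rel1c : d*(d*u) = α•(d*(u*d)) + β•(u*(d*d)) + γ•d := by
  have h := rel1 (α := α) (β := β) (γ := γ)
  simpa [mul_assoc] using h

lemma rel2c : d*(u*u) = α•(u*(d*u)) + β•(u*(u*d)) + γ•u := by
  have h := rel2 (α := α) (β := β) (γ := γ)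
  simpa [mul_assoc] using h

lemma comm_vw : Commute (u*d) (d*u) := by
  show (u*d) * (d*u) = (d*u) * (u*d)
  have l : (u*d)*(d*u) = u*(d*(d*u)) := by simp only [mul_assoc]
  have r : (d*u)*(u*d) = d*(u*(u*d)) := by simp only [mul_assoc]
  rw [l, r, rel1c, show d*(u*(u*d)) = d*(u*u)*d from by simp only [mul_assoc], rel2c]
  simp only [mul_add, add_mul, mul_smul_comm, smul_mul_assoc, mul_assoc]

lemma phiw {x : DownUp α β γ} (h : Commute (d*u) x) : Commute (u*d) (u*x*d) := by
  show (u*d) * (u*x*d) = (u*x*d) * (u*d)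
  calc (u*d)*(u*x*d) = u*((d*u)*x)*d := by simp only [mul_assoc]
    _ = u*(x*(d*u))*d := by rw [h.eq]
    _ = (u*x*d)*(u*d) := by simp only [mul_assoc]

lemma phiv {x : DownUp α β γ} (hv : Commute (d*u) x) (hw : Commute (u*d) x) :
    Commute (d*u) (u*x*d) := by
  show (d*u) * (u*x*d) = (u*x*d) * (d*u)
  calc (d*u)*(u*x*d) = d*(u*(u*(x*d))) := by simp only [mul_assoc]
    _ = (d*(u*u))*(x*d) := by simp only [mul_assoc]
    _ = α•(u*((d*u)*x)*d) + β•(u*((u*d)*x)*d) + γ•(u*(x*d)) := by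
        rw [rel2c]; simp only [add_mul, smul_mul_assoc, mul_assoc]
    _ = α•(u*(x*(d*u))*d) + β•(u*(x*(u*d))*d) + γ•(u*(x*d)) := by rw [hv.eq, hw.eq]
    _ = (u*x)*(d*(d*u)) := by
        rw [rel1c]; simp only [mul_add, mul_smul_comm, smul_mul_assoc, mul_assoc]
    _ = (u*x*d)*(d*u) := by simp only [mul_assoc]

lemma phi_phi {x y : DownUp α β γ} (hx : Commute (d*u) x) (hy : Commute (d*u) y)
    (hxy : Commute x y) : Commute (u*x*d) (u*y*d) := by
  show (u*x*d) * (u*y*d) = (u*y*d) * (u*x*d)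
  have key : x*((d*u)*y) = y*((d*u)*x) := by
    calc x*((d*u)*y) = x*(y*(d*u)) := by rw [hy.eq]
      _ = (x*y)*(d*u) := by rw [mul_assoc]
      _ = (y*x)*(d*u) := by rw [hxy.eq]
      _ = y*(x*(d*u)) := by rw [mul_assoc]
      _ = y*((d*u)*x) := by rw [hx.eq]
  calc (u*x*d)*(u*y*d) = u*(x*((d*u)*y))*d := by simp only [mul_assoc]
    _ = u*(y*((d*u)*x))*d := by rw [key]
    _ = (u*y*d)*(u*x*d) := by simp only [mul_assoc]

/-- the i-fold application z ↦ uⁱ z dⁱ -/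
noncomputable def Phi (α β γ : ℂ) : ℕ → DownUp α β γ → DownUp α β γ
  | 0, z => z
  | (i+1), z => DownUp.u α β γ * Phi α β γ i z * DownUp.d α β γ

lemma uvd_eq (i j : ℕ) : u^i * (d*u)^j * d^i = Phi α β γ i ((d*u)^j) := by
  induction i with
  | zero => simp [Phi]
  | succ i ih =>
    rw [Phi, ← ih, pow_succ', pow_succ]
    simp only [mul_assoc]

lemma C_mon (i j : ℕ) : Commute (d*u) (Phi α β γ i ((d*u)^j)) ∧
    Commute (u*d) (Phi α β γ i ((d*u)^j)) := by
  induction i with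
  | zero => exact ⟨(Commute.refl (d*u)).pow_right j, comm_vw.pow_right j⟩
  | succ i ih => exact ⟨phiv ih.1 ih.2, phiw ih.1⟩

lemma comm_mon : ∀ i i' j j' : ℕ,
    Commute (Phi α β γ i ((d*u)^j)) (Phi α β γ i' ((d*u)^j')) := by
  intro i
  induction i with
  | zero =>
    intro i' j j'
    simpa only [Phi] using ((C_mon (α := α) (β := β) (γ := γ) i' j').1).pow_left j
  | succ i ih =>
    intro i' j j'
    cases i' with
    | zero =>
      simpa only [Phi] using (((C_mon (α := α) (β := β) (γ := γ) (i+1) j).1).pow_left j').symm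
    | succ i' =>
      exact phi_phi (C_mon i j).1 (C_mon i' j').1 (ih i' j j')

lemma comm_G0 {x y : DownUp α β γ} (hx : x ∈ G α β γ 0) (hy : y ∈ G α β γ 0) :
    x * y = y * x := by
  induction hx using Submodule.span_induction with
  | mem a ha =>
    obtain ⟨i, j, k, h1, rfl⟩ := ha
    obtain rfl : i = k := by omega
    induction hy using Submodule.span_induction with
    | mem b hb =>
      obtain ⟨i', j', k', h1', rfl⟩ := hb
      obtain rfl : i' = k' := by omega
      rw [uvd_eq, uvd_eq]
      exact (comm_mon i i' j j').eq
    | zero => rw [mul_zero, zero_mul]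
    | add a b _ _ iha ihb => rw [mul_add, add_mul, iha, ihb]
    | smul c a _ iha => rw [mul_smul_comm, smul_mul_assoc, iha]
  | zero => rw [mul_zero, zero_mul]
  | add a b _ _ iha ihb => rw [mul_add, add_mul, iha, ihb]
  | smul c a _ iha => rw [mul_smul_comm, smul_mul_assoc, iha]

end DownUpAux

/-- Proposition 3.5: A(α,β,γ) is ℤ-graded with Aₙ = span{uⁱ(du)ʲdᵏ : i − k = n},
and A₀ is a commutative subalgebra. -/
theorem downUp_graded (α β γ : ℂ) (Agr : ℤ → Submodule ℂ (DownUp α β γ))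
    (hAgr : ∀ n : ℤ, Agr n = Submodule.span ℂ
      {a : DownUp α β γ | ∃ i j k : ℕ, (i : ℤ) - (k : ℤ) = n ∧
        a = DownUp.u α β γ ^ i * (DownUp.d α β γ * DownUp.u α β γ) ^ j
          * DownUp.d α β γ ^ k}) :
    DirectSum.IsInternal Agr ∧
    (∀ m n : ℤ, Agr m * Agr n ≤ Agr (m + n)) ∧
    (∀ x ∈ Agr 0, ∀ y ∈ Agr 0, x * y = y * x) := by
  have hG : Agr = fun n => DownUpAux.G α β γ n := funext fun n => (hAgr n).trans rfl
  subst hG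
  refine ⟨?_, ?_, ?_⟩
  · rw [DirectSum.isInternal_submodule_iff_iSupIndep_and_iSup_eq_top]
    exact ⟨DownUpAux.indep_G, DownUpAux.iSup_G_eq_top⟩
  · intro m n
    rw [Submodule.mul_le]
    intro x hx y hy
    exact DownUpAux.mul_G hx hy
  · intro x hx y hy
    exact DownUpAux.comm_G0 hx hy
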